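/- Fix r with 0 < r < 1, and for p ∈ (0,1) define the sequence a_0 = p, a_k = (1−p²)p^{k−1} for k ≥ 1, and S(p) = Σ_{n=0}^∞ r^n · (Σ_{k=0}^n a_k/(n+1)^{k+1}). Then S(p) → (1/r)·log(1/(1−r)) as p → 1⁻. In particular, for every ε > 0 there exists p ∈ (0,1) with S(p) > (1/r)·log(1/(1−r)) − ε. -/

import Mathlib

open Real Finset

/-- Sharpness of the discrete Laplace transform bound (Theorem 2.4 /
Corollary 2.3): the Laplace majorant series of the extremal functions tends to
the bound `(1/r) log (1/(1-r))` as `p → 1⁻`, so for every `ε > 0` some `p`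
comes within `ε` of the bound. -/
theorem laplace_bohr_sharp (r : ℝ) (hr : r ∈ Set.Ioo (0 : ℝ) 1)
    (S : ℝ → ℝ)
    (hS : ∀ p, S p = ∑' n : ℕ, r ^ n *
        ∑ k ∈ Finset.range (n + 1),
          (if k = 0 then p else (1 - p ^ 2) * p ^ (k - 1)) /
            ((n : ℝ) + 1) ^ (k + 1)) :
    Filter.Tendsto S (nhdsWithin 1 (Set.Ioo (0 : ℝ) 1))
        (nhds ((1 / r) * Real.log (1 / (1 - r)))) ∧
      ∀ ε > (0 : ℝ), ∃ p ∈ Set.Ioo (0 : ℝ) 1,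
        (1 / r) * Real.log (1 / (1 - r)) - ε < S p := by
  obtain ⟨hr0, hr1⟩ := hr
  have hrne : r ≠ 0 := ne_of_gt hr0
  set f : ℝ → ℕ → ℝ := fun p n => r ^ n *
      ∑ k ∈ Finset.range (n + 1),
        (if k = 0 then p else (1 - p ^ 2) * p ^ (k - 1)) / ((n : ℝ) + 1) ^ (k + 1)
    with hf
  set g : ℕ → ℝ := fun n => r ^ n / ((n : ℝ) + 1) with hg
  -- sum of the limit series
  have hgsum : HasSum g ((1 / r) * Real.log (1 / (1 - r))) := by
    have habs : |r| < 1 := by rw [abs_of_pos hr0]; exact hr1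
    have h1 := (Real.hasSum_pow_div_log_of_abs_lt_one habs).mul_left (1 / r)
    have : (fun n : ℕ => (1 / r) * (r ^ (n + 1) / (n + 1))) = g := by
      funext n
      simp only [hg]
      field_simp [pow_succ]
      try ring
    rw [this] at h1
    rw [one_div (1 - r), Real.log_inv]
    exact h1
  -- pointwise limit
  have hpt : ∀ n : ℕ, Filter.Tendsto (f · n) (nhdsWithin 1 (Set.Ioo (0 : ℝ) 1)) (nhds (g n)) := by
    intro n
    have hc : Continuous (f · n) := by
      apply Continuous.mul continuous_const
      apply continuous_finset_sum
      intro k _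
      apply Continuous.div _ continuous_const (fun x => by positivity)
      by_cases h : k = 0 <;> simp [h] <;> fun_prop
    have h1 : f 1 n = g n := by
      have : ∀ k ∈ Finset.range (n + 1),
          (if k = 0 then (1:ℝ) else (1 - 1 ^ 2) * 1 ^ (k - 1)) / ((n : ℝ) + 1) ^ (k + 1)
            = if k = 0 then 1 / ((n:ℝ)+1) else 0 := by
        intro k _
        by_cases h : k = 0 <;> simp [h]
      simp only [hf, hg, Finset.sum_congr rfl this, Finset.sum_ite_eq']
      simp [pow_succ, div_eq_mul_inv]
    exact (hc.tendsto' 1 (g n) h1).mono_left nhdsWithin_le_nhds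
  -- domination
  have hbd : ∀ᶠ p in nhdsWithin 1 (Set.Ioo (0 : ℝ) 1), ∀ n : ℕ, ‖f p n‖ ≤ r ^ n := by
    filter_upwards [self_mem_nhdsWithin] with p hp n
    obtain ⟨hp0, hp1⟩ := hp
    have hterm : ∀ k ∈ Finset.range (n + 1),
        (if k = 0 then p else (1 - p ^ 2) * p ^ (k - 1)) / ((n : ℝ) + 1) ^ (k + 1)
          ∈ Set.Icc (0:ℝ) (1 / ((n:ℝ)+1)) := by
      intro k _
      have hpow : ((n:ℝ)+1) ≤ ((n : ℝ) + 1) ^ (k + 1) := by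
        calc ((n:ℝ)+1) = ((n:ℝ)+1) ^ 1 := (pow_one _).symm
        _ ≤ ((n : ℝ) + 1) ^ (k + 1) :=
          pow_le_pow_right₀ (by push_cast; linarith) (by omega)
      have hsq : (0:ℝ) ≤ 1 - p ^ 2 := by nlinarith
      have hple : p ^ (k - 1) ≤ 1 := pow_le_one₀ hp0.le hp1.le
      have hpnn : (0:ℝ) ≤ p ^ (k - 1) := pow_nonneg hp0.le _
      have hnum0 : (0:ℝ) ≤ (if k = 0 then p else (1 - p ^ 2) * p ^ (k - 1)) := by
        by_cases h : k = 0
        · simp [h]; exact hp0.le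
        · simp [h]; exact mul_nonneg hsq hpnn
      have hnum1 : (if k = 0 then p else (1 - p ^ 2) * p ^ (k - 1)) ≤ 1 := by
        by_cases h : k = 0
        · simp [h]; linarith
        · simp [h]; nlinarith
      constructor
      · positivity
      · exact div_le_div₀ zero_le_one hnum1 (by positivity) hpow
    have hsum0 : 0 ≤ ∑ k ∈ Finset.range (n + 1),
        (if k = 0 then p else (1 - p ^ 2) * p ^ (k - 1)) / ((n : ℝ) + 1) ^ (k + 1) :=
      Finset.sum_nonneg fun k hk => (hterm k hk).1
    have hsum1 : (∑ k ∈ Finset.range (n + 1),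
        (if k = 0 then p else (1 - p ^ 2) * p ^ (k - 1)) / ((n : ℝ) + 1) ^ (k + 1)) ≤ 1 := by
      calc _ ≤ ∑ k ∈ Finset.range (n + 1), 1 / ((n:ℝ)+1) :=
            Finset.sum_le_sum fun k hk => (hterm k hk).2
        _ = 1 := by
            rw [Finset.sum_const, Finset.card_range, nsmul_eq_mul]
            push_cast
            field_simp
    rw [hf]
    simp only [Real.norm_eq_abs]
    rw [abs_of_nonneg (by positivity)]
    calc r ^ n * _ ≤ r ^ n * 1 := by
          exact mul_le_mul_of_nonneg_left hsum1 (by positivity)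
      _ = r ^ n := mul_one _
  have hbsum : Summable fun n : ℕ => r ^ n := summable_geometric_of_lt_one hr0.le hr1
  have htend : Filter.Tendsto S (nhdsWithin 1 (Set.Ioo (0 : ℝ) 1))
      (nhds ((1 / r) * Real.log (1 / (1 - r)))) := by
    have := tendsto_tsum_of_dominated_convergence (f := f) (g := g) hbsum hpt hbd
    rw [hgsum.tsum_eq] at this
    have hSf : S = fun p => ∑' n, f p n := by funext p; exact hS p
    rw [hSf]
    exact this
  refine ⟨htend, fun ε hε => ?_⟩
  have hne : (nhdsWithin (1:ℝ) (Set.Ioo (0 : ℝ) 1)).NeBot :=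
    right_nhdsWithin_Ioo_neBot (by norm_num)
  have hev : ∀ᶠ p in nhdsWithin (1:ℝ) (Set.Ioo (0 : ℝ) 1),
      (1 / r) * Real.log (1 / (1 - r)) - ε < S p := by
    have := htend.eventually (eventually_gt_nhds (by linarith :
      (1 / r) * Real.log (1 / (1 - r)) - ε < (1 / r) * Real.log (1 / (1 - r))))
    exact this
  obtain ⟨p, hp, hlt⟩ := (hev.and self_mem_nhdsWithin).exists
  exact ⟨p, hlt, hp⟩
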